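/- For every real number α > 1 and every integer n ≥ 3, one has ((2n)^α + 2^α)^(1/α) > ((2n-2)^α + 4^α)^(1/α). -/

import Mathlib

open Set

theorem stmt_0 (α : ℝ) (hα : 1 < α) (n : ℕ) (hn : 3 ≤ n) :
    ((2 * (n : ℝ)) ^ α + 2 ^ α) ^ (1 / α) >
      ((2 * (n : ℝ) - 2) ^ α + 4 ^ α) ^ (1 / α) := by
  have hn' : (3 : ℝ) ≤ (n : ℝ) := by exact_mod_cast hn
  set a : ℝ := 2 * (n : ℝ) - 2 with ha
  have ha4 : (4 : ℝ) ≤ a := by simp [ha]; linarith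
  have ha0 : (0 : ℝ) < a := by linarith
  have hsc := strictConvexOn_rpow hα
  have h2 : (2 : ℝ) ∈ Ici (0:ℝ) := by norm_num
  have hb : a + 2 ∈ Ici (0:ℝ) := by simp; linarith
  have hne : (2 : ℝ) ≠ a + 2 := by linarith
  -- 4 = t•2 + (1-t)•(a+2), t = (a-2)/a
  have ht : (0:ℝ) < (a - 2) / a := div_pos (by linarith) ha0
  have ht' : (0:ℝ) < 1 - (a - 2) / a := by
    rw [sub_pos, div_lt_one ha0]; linarith
  have h1 := hsc.2 h2 hb hne ht ht' (by ring)
  -- a = s•2 + (1-s)•(a+2), s = 2/a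
  have hs : (0:ℝ) < 2 / a := by positivity
  have hs' : (0:ℝ) < 1 - 2 / a := by
    rw [sub_pos, div_lt_one ha0]; linarith
  have h2' := hsc.2 h2 hb hne hs hs' (by ring)
  have e1 : ((a - 2) / a) • (2:ℝ) + (1 - (a - 2) / a) • (a + 2) = 4 := by
    rw [smul_eq_mul, smul_eq_mul]; field_simp
    try ring
  have e2 : ((2:ℝ) / a) • (2:ℝ) + (1 - 2 / a) • (a + 2) = a := by
    rw [smul_eq_mul, smul_eq_mul]; field_simp
    try ring
  rw [e1] at h1
  rw [e2] at h2'
  have key : a ^ α + (4:ℝ) ^ α < (a + 2) ^ α + 2 ^ α := by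
    have hsum : (a - 2) / a + 2 / a = 1 := by field_simp; ring
    have hT := add_lt_add h1 h2'
    simp only [smul_eq_mul] at hT
    have e3 : (a - 2) / a * 2 ^ α + 2 / a * 2 ^ α = 2 ^ α := by
      rw [← add_mul, hsum, one_mul]
    have e4 : (1 - (a - 2) / a) * (a + 2) ^ α + (1 - 2 / a) * (a + 2) ^ α
        = (a + 2) ^ α := by
      have : (1 - (a - 2) / a) + (1 - 2 / a) = 1 := by linarith
      rw [← add_mul, this, one_mul]
    linarith
  have h2n : 2 * (n : ℝ) = a + 2 := by simp [ha]
  rw [h2n]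
  have hpos : (0:ℝ) < a ^ α + 4 ^ α := by positivity
  exact Real.rpow_lt_rpow (le_of_lt hpos) (by linarith) (by positivity)
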